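/- Let S, Y be convex subsets of ℝ^d with nonempty interiors. Let φ, ψ : S → ℝ ∪ {+∞} be convex functions such that ∇φ : Int(S) → Int(Y) is continuous (φ differentiable on Int(S)) and ∇φ = ∇ψ Lebesgue-almost everywhere on Int(S). Then ψ is differentiable everywhere on Int(S) and ∇ψ(y) = ∇φ(y) for all y ∈ Int(S). -/

import Mathlib

open scoped RealInnerProductSpace
open Filter

noncomputable section

abbrev E (d : ℕ) : Type := EuclideanSpace ℝ (Fin d)

/-- Subdifferential of a real-valued function at a point. -/
def subdiffR {d : ℕ} (f : E d → ℝ) (x : E d) : Set (E d) :=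
  {ξ | ∀ y : E d, f x + ⟪ξ, y - x⟫ ≤ f y}

/-- Subdifferential of an `EReal`-valued function at a point. -/
def subdiffE {d : ℕ} (f : E d → EReal) (x : E d) : Set (E d) :=
  {ξ | ∀ y : E d, f x + ((⟪ξ, y - x⟫ : ℝ) : EReal) ≤ f y}

/-- Convexity of an `EReal`-valued function. -/
def ConvexE {d : ℕ} (f : E d → EReal) : Prop :=
  ∀ x y : E d, ∀ a b : ℝ, 0 ≤ a → 0 ≤ b → a + b = 1 →
    f (a • x + b • y) ≤ (a : EReal) * f x + (b : EReal) * f y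
open MeasureTheory
open scoped Topology

/-- Convex `φ, ψ : S → ℝ ∪ {+∞}` (S, Y convex with nonempty interiors) with
`φ` differentiable on `Int S`, `∇φ : Int S → Int Y` continuous, and `∇φ = ∇ψ`
Lebesgue-a.e. on `Int S`. Then `ψ` is differentiable everywhere on `Int S` and
`∇ψ = ∇φ` there (expressed via singleton subdifferentials). -/
theorem statement17 {d : ℕ} (S Y : Set (E d)) (hS : Convex ℝ S) (hY : Convex ℝ Y)
    (hSne : (interior S).Nonempty) (hYne : (interior Y).Nonempty)
    (φ ψ : E d → EReal) (hφ : ConvexE φ) (hψ : ConvexE ψ)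
    (hbotφ : ∀ x, φ x ≠ ⊥) (hbotψ : ∀ x, ψ x ≠ ⊥)
    (gφ : E d → E d) (hφdiff : ∀ x ∈ interior S, subdiffE φ x = {gφ x})
    (hcont : ContinuousOn gφ (interior S))
    (hmaps : Set.MapsTo gφ (interior S) (interior Y))
    (hae : ∀ᵐ x ∂(volume : Measure (E d)), x ∈ interior S → subdiffE ψ x = {gφ x}) :
    ∀ x ∈ interior S, subdiffE ψ x = {gφ x} := by
  classical
  set U := interior S with hUdef
  have hUopen : IsOpen U := isOpen_interior
  have hUconv : Convex ℝ U := hS.interior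
  -- the null set where the a.e. hypothesis fails
  set N : Set (E d) := {a | a ∈ U ∧ subdiffE ψ a ≠ {gφ a}} with hNdef
  have hN : volume N = 0 := by
    have h := ae_iff.mp hae
    convert h using 2
    ext a
    simp [hNdef, Classical.not_imp]
  -- nonempty open sets minus a null set are nonempty
  have hdiff : ∀ (O M : Set (E d)), IsOpen O → O.Nonempty → volume M = 0 →
      (O \ M).Nonempty := by
    intro O M hO hOne hM
    rw [Set.nonempty_iff_ne_empty]
    intro h
    have hsub : O ⊆ M := by rwa [Set.diff_eq_empty] at h
    exact absurd (le_antisymm (hM ▸ measure_mono hsub) zero_le)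
      (hO.measure_pos volume hOne).ne'
  -- density of good points
  have hA_dense : ∀ w ∈ U, ∀ ε : ℝ, 0 < ε →
      ∃ a, a ∈ U ∧ subdiffE ψ a = {gφ a} ∧ dist a w < ε := by
    intro w hw ε hε
    obtain ⟨a, haO, haN⟩ := hdiff (Metric.ball w ε ∩ U) N
      (Metric.isOpen_ball.inter hUopen) ⟨w, Metric.mem_ball_self hε, hw⟩ hN
    refine ⟨a, haO.2, ?_, Metric.mem_ball.mp haO.1⟩
    by_contra h
    exact haN ⟨haO.2, h⟩
  -- reflections preserve null sets
  have hrefl : ∀ (c : E d), volume ((fun z : E d => c - z) ⁻¹' N) = 0 := by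
    intro c
    have heq : (fun z : E d => c - z) ⁻¹' N
        = (fun z : E d => -z) ⁻¹' ((fun z : E d => c + z) ⁻¹' N) := by
      ext z; simp [sub_eq_add_neg]
    rw [heq]
    have h1 : (fun z : E d => -z) = (Neg.neg : E d → E d) := rfl
    rw [h1, Measure.measure_preimage_neg, measure_preimage_add, hN]
  intro x hx
  -- case: ψ is identically ⊤
  by_cases hcase : ∃ a, a ∈ U ∧ subdiffE ψ a = {gφ a} ∧ ψ a = ⊤
  · obtain ⟨a, haU, haS, hatop⟩ := hcase
    have hga : gφ a ∈ subdiffE ψ a := by rw [haS]; exact Set.mem_singleton _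
    have htop : ∀ y, ψ y = ⊤ := by
      intro y
      have h := hga y
      rw [hatop, EReal.top_add_coe] at h
      exact top_le_iff.mp h
    have huniv : ∀ w : E d, subdiffE ψ w = Set.univ := by
      intro w
      ext ξ
      simp only [Set.mem_univ, iff_true]
      intro y
      rw [htop w, htop y, EReal.top_add_coe]
    have hsingle : (Set.univ : Set (E d)) = {gφ a} := (huniv a).symm.trans haS
    have hgx : gφ x = gφ a := by
      have h := Set.mem_univ (gφ x)
      rw [hsingle] at h
      exact h
    rw [huniv x, hgx]
    exact hsingle
  push_neg at hcase
  -- ψ is finite at all good points, hence on all of U by a reflection argument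
  have hfinA : ∀ a, a ∈ U → subdiffE ψ a = {gφ a} → ψ a ≠ ⊤ := fun a h1 h2 =>
    hcase a h1 h2
  have hfinU : ∀ w ∈ U, ψ w ≠ ⊤ := by
    intro w hw
    obtain ⟨r, hr, hball⟩ := Metric.isOpen_iff.mp hUopen w hw
    obtain ⟨u, huB, hunm⟩ := hdiff (Metric.ball w r)
      (N ∪ ((fun z : E d => (w + w) - z) ⁻¹' N)) Metric.isOpen_ball
      ⟨w, Metric.mem_ball_self hr⟩ (measure_union_null hN (hrefl _))
    have huU : u ∈ U := hball huB
    have huA : subdiffE ψ u = {gφ u} := by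
      by_contra h
      exact hunm (Set.mem_union_left _ ⟨huU, h⟩)
    set v : E d := (w + w) - u with hvdef
    have hvB : v ∈ Metric.ball w r := by
      rw [Metric.mem_ball, dist_eq_norm]
      have hvw : v - w = w - u := by rw [hvdef]; abel
      rw [hvw, norm_sub_rev, ← dist_eq_norm]
      exact Metric.mem_ball.mp huB
    have hvU : v ∈ U := hball hvB
    have hvA : subdiffE ψ v = {gφ v} := by
      by_contra h
      have : u ∈ (fun z : E d => (w + w) - z) ⁻¹' N := ⟨hvU, h⟩
      exact hunm (Set.mem_union_right _ this)
    have hpu : ψ u = ((ψ u).toReal : EReal) := (EReal.coe_toReal (hfinA u huU huA) (hbotψ u)).symm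
    have hpv : ψ v = ((ψ v).toReal : EReal) := (EReal.coe_toReal (hfinA v hvU hvA) (hbotψ v)).symm
    have hmid : (1/2 : ℝ) • u + (1/2 : ℝ) • v = w := by
      rw [hvdef]; module
    have hcomb := hψ u v (1/2) (1/2) (by norm_num) (by norm_num) (by norm_num)
    rw [hmid, hpu, hpv, ← EReal.coe_mul, ← EReal.coe_mul, ← EReal.coe_add] at hcomb
    intro htop
    rw [htop] at hcomb
    exact EReal.coe_ne_top _ (top_le_iff.mp hcomb)
  -- the real-valued version of ψ
  set F : E d → ℝ := fun w => (ψ w).toReal with hFdef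
  have hFψ : ∀ w ∈ U, ψ w = ((F w : ℝ) : EReal) := fun w hw =>
    (EReal.coe_toReal (hfinU w hw) (hbotψ w)).symm
  have hFconv : ConvexOn ℝ U F := by
    refine ⟨hUconv, ?_⟩
    intro p hp q hq a b ha hb hab
    have h := hψ p q a b ha hb hab
    have hpq : a • p + b • q ∈ U := hUconv hp hq ha hb hab
    rw [hFψ _ hpq, hFψ _ hp, hFψ _ hq, ← EReal.coe_mul, ← EReal.coe_mul,
      ← EReal.coe_add] at h
    exact EReal.coe_le_coe_iff.mp h
  have hFcont : ContinuousOn F U := hFconv.continuousOn hUopen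
  -- a sequence of good points converging to x
  have hzex : ∀ n : ℕ, ∃ a, a ∈ U ∧ subdiffE ψ a = {gφ a} ∧ dist a x < 1/(n+1) :=
    fun n => hA_dense x hx _ (by positivity)
  choose z hzU hzS hzd using hzex
  have hzx : Tendsto z atTop (𝓝 x) := by
    rw [tendsto_iff_dist_tendsto_zero]
    exact squeeze_zero (fun n => dist_nonneg) (fun n => (hzd n).le)
      tendsto_one_div_add_atTop_nhds_zero_nat
  have hzxU : Tendsto z atTop (𝓝[U] x) :=
    tendsto_nhdsWithin_iff.mpr ⟨hzx, Eventually.of_forall hzU⟩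
  have hgz : Tendsto (fun n => gφ (z n)) atTop (𝓝 (gφ x)) :=
    (hcont x hx).tendsto.comp hzxU
  have hFz : Tendsto (fun n => F (z n)) atTop (𝓝 (F x)) :=
    (hFcont x hx).tendsto.comp hzxU
  -- gφ x is a subgradient of ψ at x
  have hsub : gφ x ∈ subdiffE ψ x := by
    intro y
    by_cases hy : ψ y = ⊤
    · rw [hy]; exact le_top
    have hry : ψ y = ((ψ y).toReal : EReal) := (EReal.coe_toReal hy (hbotψ y)).symm
    set ry : ℝ := (ψ y).toReal with hrydef
    have hn : ∀ n, F (z n) + ⟪gφ (z n), y - z n⟫ ≤ ry := by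
      intro n
      have hmem : gφ (z n) ∈ subdiffE ψ (z n) := by rw [hzS n]; exact Set.mem_singleton _
      have h := hmem y
      rw [hFψ _ (hzU n), hry, ← EReal.coe_add] at h
      exact EReal.coe_le_coe_iff.mp h
    have htend : Tendsto (fun n => F (z n) + ⟪gφ (z n), y - z n⟫) atTop
        (𝓝 (F x + ⟪gφ x, y - x⟫)) :=
      hFz.add (hgz.inner (tendsto_const_nhds.sub hzx))
    have hlim := le_of_tendsto htend (Eventually.of_forall hn)
    rw [hFψ x hx, hry, ← EReal.coe_add]
    exact EReal.coe_le_coe_iff.mpr hlim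
  -- conclude via uniqueness of the subgradient
  ext ξ
  simp only [Set.mem_singleton_iff]
  constructor
  · intro hξ
    -- monotonicity: ⟪gφ a - ξ, a - x⟫ ≥ 0 at all good points a
    have hmono : ∀ a, a ∈ U → subdiffE ψ a = {gφ a} → 0 ≤ ⟪gφ a - ξ, a - x⟫ := by
      intro a haU haS
      have hga : gφ a ∈ subdiffE ψ a := by rw [haS]; exact Set.mem_singleton _
      have h1 : F x + ⟪ξ, a - x⟫ ≤ F a := by
        have h := hξ a
        rw [hFψ x hx, hFψ a haU, ← EReal.coe_add] at h
        exact EReal.coe_le_coe_iff.mp h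
      have h2 : F a + ⟪gφ a, x - a⟫ ≤ F x := by
        have h := hga x
        rw [hFψ x hx, hFψ a haU, ← EReal.coe_add] at h
        exact EReal.coe_le_coe_iff.mp h
      have hxa : (x : E d) - a = -(a - x) := by abel
      rw [inner_sub_left]
      rw [hxa, inner_neg_right] at h2
      linarith
    by_contra hne
    set u : E d := ξ - gφ x with hudef
    have hu0 : u ≠ 0 := sub_ne_zero.mpr hne
    set c : ℝ := ‖u‖ with hcdef
    have hc : 0 < c := norm_pos_iff.mpr hu0
    -- continuity of gφ at x
    obtain ⟨δ0, hδ0, hδ0c⟩ := Metric.continuousWithinAt_iff.mp (hcont x hx) (c/4)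
      (by positivity)
    obtain ⟨δ1, hδ1, hball1⟩ := Metric.isOpen_iff.mp hUopen x hx
    set δ : ℝ := min δ0 δ1 with hδdef
    have hδ : 0 < δ := lt_min hδ0 hδ1
    set t : ℝ := δ / (2*c) with htdef
    have ht : 0 < t := by positivity
    -- a good point near x + t • u
    have hbsub : Metric.ball (x + t • u) (t*c/4) ⊆ U := by
      intro w' hw'
      apply hball1
      rw [Metric.mem_ball]
      calc dist w' x ≤ dist w' (x + t • u) + dist (x + t • u) x := dist_triangle _ _ _
        _ < t*c/4 + t*c := by
            apply add_lt_add_of_lt_of_le (Metric.mem_ball.mp hw')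
            rw [dist_eq_norm, add_sub_cancel_left, norm_smul, Real.norm_eq_abs,
              abs_of_pos ht]
        _ = (5/8) * δ := by rw [htdef]; field_simp; ring
        _ < δ := by linarith
        _ ≤ δ1 := min_le_right _ _
    obtain ⟨a, haB, haN⟩ := hdiff (Metric.ball (x + t • u) (t*c/4)) N Metric.isOpen_ball
      ⟨x + t • u, Metric.mem_ball_self (by positivity)⟩ hN
    have haU : a ∈ U := hbsub haB
    have haS : subdiffE ψ a = {gφ a} := by
      by_contra h
      exact haN ⟨haU, h⟩
    have hadx : dist a x < δ := by
      calc dist a x ≤ dist a (x + t • u) + dist (x + t • u) x := dist_triangle _ _ _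
        _ < t*c/4 + t*c := by
            apply add_lt_add_of_lt_of_le (Metric.mem_ball.mp haB)
            rw [dist_eq_norm, add_sub_cancel_left, norm_smul, Real.norm_eq_abs,
              abs_of_pos ht]
        _ = (5/8) * δ := by rw [htdef]; field_simp; ring
        _ < δ := by linarith
    have hea : ‖gφ a - gφ x‖ < c/4 := by
      have := hδ0c haU (lt_of_lt_of_le hadx (min_le_left _ _))
      rwa [dist_eq_norm] at this
    set e : E d := gφ a - gφ x with hedef
    set w : E d := a - x - t • u with hwdef
    have hwn : ‖w‖ < t*c/4 := by
      have := Metric.mem_ball.mp haB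
      rw [dist_eq_norm] at this
      have heq : a - (x + t • u) = w := by rw [hwdef]; abel
      rwa [heq] at this
    have heq1 : gφ a - ξ = e - u := by rw [hedef, hudef]; abel
    have heq2 : a - x = t • u + w := by rw [hwdef]; abel
    have hexp : ⟪gφ a - ξ, a - x⟫ = t*⟪e,u⟫ + ⟪e,w⟫ - (t*⟪u,u⟫ + ⟪u,w⟫) := by
      rw [heq1, heq2, inner_sub_left, inner_add_right, inner_add_right,
        real_inner_smul_right, real_inner_smul_right]
    have huu : ⟪u,u⟫ = c^2 := by
      rw [hcdef, real_inner_self_eq_norm_sq]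
    have hb1 : ⟪e,u⟫ ≤ (c/4) * c := by
      calc ⟪e,u⟫ ≤ ‖e‖ * ‖u‖ := real_inner_le_norm e u
        _ ≤ (c/4) * c := by
            apply mul_le_mul hea.le (le_refl _) (norm_nonneg _) (by positivity)
    have hb2 : ⟪e,w⟫ ≤ (c/4) * (t*c/4) := by
      calc ⟪e,w⟫ ≤ ‖e‖ * ‖w‖ := real_inner_le_norm e w
        _ ≤ (c/4) * (t*c/4) := by
            apply mul_le_mul hea.le hwn.le (norm_nonneg _) (by positivity)
    have hb3 : -⟪u,w⟫ ≤ c * (t*c/4) := by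
      have h := abs_real_inner_le_norm u w
      have h2 : ‖u‖ * ‖w‖ ≤ c * (t*c/4) := by
        apply mul_le_mul (le_refl _) hwn.le (norm_nonneg _) hc.le
      have h3 := neg_abs_le ⟪u,w⟫
      calc -⟪u,w⟫ ≤ |⟪u,w⟫| := by
            rw [← abs_neg]; exact le_abs_self _
        _ ≤ ‖u‖ * ‖w‖ := h
        _ ≤ c * (t*c/4) := h2
    have hpos := hmono a haU haS
    rw [hexp, huu] at hpos
    nlinarith [mul_pos ht (mul_pos hc hc), mul_le_mul_of_nonneg_left hb1 ht.le]
  · rintro rfl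
    exact hsub
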